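/- For F ∈ SMU(δ=1), the hardness of F and of its doped version D(F) both equal the Horton-Strahler number of the tree T(F) associated to F: hd(F) = hd(D(F)) = hs(T(F)). -/

import Mathlib

/-- Literals: a variable (ℕ) with a polarity. -/
abbrev Lit := ℕ × Bool

/-- Complement of a literal. -/
def Lit.comp (x : Lit) : Lit := (x.1, !x.2)

/-- A clause is a finite set of literals. -/
abbrev Clause := Finset Lit

/-- A clause-set (CNF). -/
abbrev ClauseSet := Finset Clause

/-- Complementation of all literals of a clause. -/
def Clause.compl (C : Clause) : Clause := C.image Lit.comp

/-- Value of a literal under a total assignment. -/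
def Lit.eval (a : ℕ → Bool) (x : Lit) : Bool := if x.2 then a x.1 else !(a x.1)

/-- A clause is satisfied by an assignment iff some literal evaluates to true. -/
def Clause.sat (a : ℕ → Bool) (C : Clause) : Prop := ∃ x ∈ C, Lit.eval a x = true

/-- An assignment satisfies a clause-set (as CNF) iff it satisfies every clause. -/
def satisfies (a : ℕ → Bool) (F : ClauseSet) : Prop := ∀ C ∈ F, Clause.sat a C

/-- Semantic entailment of a clause. -/
def entails (F : ClauseSet) (C : Clause) : Prop := ∀ a, satisfies a F → Clause.sat a C

def unsat (F : ClauseSet) : Prop := ¬ ∃ a, satisfies a F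

/-- Logical equivalence of clause-sets. -/
def equivCls (F G : ClauseSet) : Prop := ∀ a, satisfies a F ↔ satisfies a G

/-- Minimally unsatisfiable clause-sets. -/
def minUnsat (F : ClauseSet) : Prop := unsat F ∧ ∀ F' ⊂ F, ¬ unsat F'

/-- A clause is complement-free (no clashing pair). -/
def tautFree (C : Clause) : Prop := ∀ x ∈ C, Lit.comp x ∉ C

/-- F is a minimal premise set for clause C. -/
def mpsFor (F : ClauseSet) (C : Clause) : Prop :=
  tautFree C ∧ entails F C ∧ ∀ F' ⊂ F, ¬ entails F' C

/-- F is a minimal premise set. -/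
def isMps (F : ClauseSet) : Prop := ∃ C, mpsFor F C

/-- C is a prime implicate of F. -/
def primeImp (F : ClauseSet) (C : Clause) : Prop :=
  tautFree C ∧ entails F C ∧ ∀ C' ⊂ C, ¬ entails F C'

/-- The set of all prime implicates of F. -/
def primeSet (F : ClauseSet) : Set Clause := {C | primeImp F C}

/-- The set of literals occurring in F. -/
def lits (F : ClauseSet) : Finset Lit := F.sup id

/-- The pure clause of F: the set of pure literals of F. -/
def pureC (F : ClauseSet) : Clause := (lits F).filter (fun x => Lit.comp x ∉ lits F)

def varsC (C : Clause) : Finset ℕ := C.image Prod.fst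

def vars (F : ClauseSet) : Finset ℕ := F.sup varsC

/-- Partial assignments. -/
abbrev PAssign := ℕ → Option Bool

/-- Value of a literal under a partial assignment. -/
def Lit.pval (φ : PAssign) (x : Lit) : Option Bool :=
  (φ x.1).map (fun b => if x.2 then b else !b)

/-- Removing falsified literals from a clause. -/
def papplyC (φ : PAssign) (C : Clause) : Clause := C.filter (fun x => Lit.pval φ x ≠ some false)

/-- A clause is satisfied by a partial assignment. -/
def csat (φ : PAssign) (C : Clause) : Prop := ∃ x ∈ C, Lit.pval φ x = some true

instance (φ : PAssign) (C : Clause) : Decidable (csat φ C) := by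
  unfold csat; exact inferInstance

/-- Application φ * F of a partial assignment to a clause-set. -/
def papply (φ : PAssign) (F : ClauseSet) : ClauseSet :=
  (F.filter (fun C => ¬ csat φ C)).image (papplyC φ)

/-- The partial assignment setting precisely the pure literals of F to false. -/
def pureFalse (F : ClauseSet) : PAssign := fun v =>
  if ((v, true) : Lit) ∈ pureC F then some false
  else if ((v, false) : Lit) ∈ pureC F then some true
  else none

/-- Doping: add a fresh positive variable `u C` to every clause C. -/
def dope (u : Clause → ℕ) (F : ClauseSet) : ClauseSet :=
  F.image (fun C => insert ((u C, true) : Lit) C)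

/-- The doping variables are fresh and pairwise distinct. -/
def freshDoping (u : Clause → ℕ) (F : ClauseSet) : Prop :=
  (∀ C ∈ F, u C ∉ vars F) ∧ Set.InjOn u ↑F

/-- Resolution trees: axioms at leaves, resolution steps at inner nodes
(with the designated resolution literal). -/
inductive ResTree where
  | ax : Clause → ResTree
  | res : Lit → ResTree → ResTree → ResTree

/-- Conclusion clause of a resolution tree. -/
def ResTree.concl : ResTree → Clause
  | .ax C => C
  | .res x T1 T2 => (T1.concl ∪ T2.concl) \ {x, Lit.comp x}

/-- Validity: at each step the two parents clash in exactly the resolution literal. -/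
def ResTree.valid : ResTree → Prop
  | .ax _ => True
  | .res x T1 T2 => T1.valid ∧ T2.valid ∧ T1.concl ∩ Clause.compl T2.concl = {x}

/-- Axioms (leaf clauses) of a resolution tree. -/
def ResTree.axioms : ResTree → ClauseSet
  | .ax C => {C}
  | .res _ T1 T2 => T1.axioms ∪ T2.axioms

/-- Horton-Strahler number of a resolution tree. -/
def ResTree.hts : ResTree → ℕ
  | .ax _ => 0
  | .res _ T1 T2 => if T1.hts = T2.hts then T1.hts + 1 else max T1.hts T2.hts

/-- Regularity: no resolution variable repeated on a root-to-leaf path. -/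
def ResTree.regAux : ResTree → Finset ℕ → Prop
  | .ax _, _ => True
  | .res x T1 T2, S => x.1 ∉ S ∧ T1.regAux (insert x.1 S) ∧ T2.regAux (insert x.1 S)

def ResTree.regular (T : ResTree) : Prop := T.regAux ∅

/-- k-resolution: each step has a parent clause of length at most k. -/
def ResTree.kres (k : ℕ) : ResTree → Prop
  | .ax _ => True
  | .res _ T1 T2 => (T1.concl.card ≤ k ∨ T2.concl.card ≤ k) ∧ T1.kres k ∧ T2.kres k

/-- F has a resolution refutation of Horton-Strahler number at most k. -/
def refutesLe (F : ClauseSet) (k : ℕ) : Prop :=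
  ∃ T : ResTree, T.valid ∧ T.axioms ⊆ F ∧ T.concl = ∅ ∧ T.hts ≤ k

/-- Hardness at most k: every unsatisfiable instantiation has a refutation of
Horton-Strahler number at most k. -/
def hdLe (F : ClauseSet) (k : ℕ) : Prop :=
  ∀ φ : PAssign, unsat (papply φ F) → refutesLe (papply φ F) k

/-- Hardness. -/
noncomputable def hd (F : ClauseSet) : ℕ := sInf {k | hdLe F k}

/-- F has a k-resolution refutation. -/
def kresRefutes (F : ClauseSet) (k : ℕ) : Prop :=
  ∃ T : ResTree, T.valid ∧ T.axioms ⊆ F ∧ T.concl = ∅ ∧ ResTree.kres k T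

/-- Asymmetric width-hardness at most k. -/
def whdLe (F : ClauseSet) (k : ℕ) : Prop :=
  ∀ φ : PAssign, unsat (papply φ F) → kresRefutes (papply φ F) k

/-- Hyperedge E^k_C of the trigger hypergraph of F. -/
def Ek (F : ClauseSet) (k : ℕ) (C : Clause) : Set Clause :=
  {C' | primeImp F C' ∧ C' ∩ Clause.compl C = ∅ ∧ (C' \ C).card ≤ k}


/-- Variable-labelled full binary trees (labels on inner nodes). -/
inductive LTree where
  | leaf : LTree
  | node : ℕ → LTree → LTree → LTree

def LTree.vars : LTree → Finset ℕ
  | .leaf => ∅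
  | .node v t1 t2 => insert v (t1.vars ∪ t2.vars)

/-- All inner-node labels are distinct. -/
def LTree.distinct : LTree → Prop
  | .leaf => True
  | .node v t1 t2 =>
      v ∉ t1.vars ∧ v ∉ t2.vars ∧ Disjoint t1.vars t2.vars ∧ t1.distinct ∧ t2.distinct

def LTree.hs : LTree → ℕ
  | .leaf => 0
  | .node _ t1 t2 => if t1.hs = t2.hs then t1.hs + 1 else max t1.hs t2.hs

def LTree.minDepth : LTree → ℕ
  | .leaf => 0
  | .node _ t1 t2 => 1 + min t1.minDepth t2.minDepth

/-- Leaf clauses (edge literals from the root, accumulated in `C`). -/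
def LTree.clausesAux : LTree → Clause → ClauseSet
  | .leaf, C => {C}
  | .node v t1 t2, C =>
      t1.clausesAux (insert ((v, true) : Lit) C) ∪ t2.clausesAux (insert ((v, false) : Lit) C)

/-- The SMU(δ=1) clause-set associated to a labelled tree. -/
def smu1 (T : LTree) : ClauseSet := T.clausesAux ∅

/-- The clause-sets of leaves of the subtrees rooted at depth exactly k. -/
def LTree.depthClauses : ℕ → LTree → Clause → Finset ClauseSet
  | 0, t, C => {t.clausesAux C}
  | _ + 1, .leaf, _ => ∅
  | k + 1, .node v t1 t2, C =>
      t1.depthClauses k (insert ((v, true) : Lit) C) ∪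
        t2.depthClauses k (insert ((v, false) : Lit) C)


/-! ### Auxiliary development -/

section Aux

-- basic literal lemmas
lemma Lit.comp_comp (x : Lit) : Lit.comp (Lit.comp x) = x := by
  simp [Lit.comp]

lemma mem_compl_iff {C : Clause} {x : Lit} : x ∈ Clause.compl C ↔ Lit.comp x ∈ C := by
  unfold Clause.compl
  constructor
  · rintro h
    rcases Finset.mem_image.1 h with ⟨y, hy, rfl⟩
    simpa [Lit.comp_comp] using hy
  · intro h
    exact Finset.mem_image.2 ⟨Lit.comp x, h, Lit.comp_comp x⟩

-- Horton-Strahler combination arithmetic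
lemma hsIf_mono {a a' b : ℕ} (h : a ≤ a') :
    (if a = b then a + 1 else max a b) ≤ (if a' = b then a' + 1 else max a' b) := by
  split_ifs <;> omega

lemma hsIf_mono' {a b b' : ℕ} (h : b ≤ b') :
    (if a = b then a + 1 else max a b) ≤ (if a = b' then a + 1 else max a b') := by
  split_ifs <;> omega

lemma hsIf_le_succ {a a' b : ℕ} (h : a ≤ a' + 1) :
    (if a = b then a + 1 else max a b) ≤ (if a' = b then a' + 1 else max a' b) + 1 := by
  split_ifs <;> omega

lemma hsIf_le_succ' {a b b' : ℕ} (h : b ≤ b' + 1) :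
    (if a = b then a + 1 else max a b) ≤ (if a = b' then a + 1 else max a b') + 1 := by
  split_ifs <;> omega

lemma le_hsIf_left {a b : ℕ} : a ≤ (if a = b then a + 1 else max a b) := by
  split_ifs <;> omega

lemma le_hsIf_right {a b : ℕ} : b ≤ (if a = b then a + 1 else max a b) := by
  split_ifs <;> omega

lemma min_succ_le_hsIf {a b : ℕ} : min a b + 1 ≤ (if a = b then a + 1 else max a b) := by
  split_ifs <;> omega

lemma hts_left_le (x : Lit) (R1 R2 : ResTree) : R1.hts ≤ (ResTree.res x R1 R2).hts := by
  simpa [ResTree.hts] using (le_hsIf_left (a := R1.hts) (b := R2.hts))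

lemma hts_right_le (x : Lit) (R1 R2 : ResTree) : R2.hts ≤ (ResTree.res x R1 R2).hts := by
  simpa [ResTree.hts] using (le_hsIf_right (a := R1.hts) (b := R2.hts))

lemma min_succ_le_hts (x : Lit) (R1 R2 : ResTree) :
    min R1.hts R2.hts + 1 ≤ (ResTree.res x R1 R2).hts := by
  simpa [ResTree.hts] using (min_succ_le_hsIf (a := R1.hts) (b := R2.hts))

end Aux

section Reduce

/-- Reduction of a labelled tree by a partial assignment. -/
def LTree.reduce (φ : PAssign) : LTree → LTree
  | .leaf => .leaf
  | .node v t1 t2 =>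
    match φ v with
    | some true => LTree.reduce φ t2
    | some false => LTree.reduce φ t1
    | none => .node v (LTree.reduce φ t1) (LTree.reduce φ t2)

lemma reduce_ext {φ φ' : PAssign} : ∀ {t : LTree}, (∀ v ∈ t.vars, φ v = φ' v) →
    t.reduce φ = t.reduce φ'
  | .leaf, _ => rfl
  | .node v t1 t2, h => by
    have hv : φ v = φ' v := h v (by simp [LTree.vars])
    have h1 : t1.reduce φ = t1.reduce φ' :=
      reduce_ext (fun w hw => h w (by simp [LTree.vars, hw]))
    have h2 : t2.reduce φ = t2.reduce φ' :=
      reduce_ext (fun w hw => h w (by simp [LTree.vars, hw]))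
    simp only [LTree.reduce, hv, h1, h2]

lemma reduce_none (t : LTree) : t.reduce (fun _ => none) = t := by
  induction t with
  | leaf => rfl
  | node v t1 t2 ih1 ih2 => simp [LTree.reduce, ih1, ih2]

lemma reduce_vars_subset (φ : PAssign) : ∀ t : LTree, (t.reduce φ).vars ⊆ t.vars
  | .leaf => by simp [LTree.reduce]
  | .node v t1 t2 => by
    have h1 := reduce_vars_subset φ t1
    have h2 := reduce_vars_subset φ t2
    simp only [LTree.reduce]
    rcases hv : φ v with _ | b
    · simp only [LTree.vars]
      intro w hw
      simp only [Finset.mem_insert, Finset.mem_union] at hw ⊢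
      rcases hw with h | h | h
      · exact Or.inl h
      · exact Or.inr (Or.inl (h1 h))
      · exact Or.inr (Or.inr (h2 h))
    · cases b
      · exact fun w hw => by
          simp only [LTree.vars, Finset.mem_insert, Finset.mem_union]
          exact Or.inr (Or.inl (h1 hw))
      · exact fun w hw => by
          simp only [LTree.vars, Finset.mem_insert, Finset.mem_union]
          exact Or.inr (Or.inr (h2 hw))

lemma reduce_distinct (φ : PAssign) : ∀ t : LTree, t.distinct → (t.reduce φ).distinct
  | .leaf, _ => trivial
  | .node v t1 t2, h => by
    obtain ⟨hv1, hv2, hdisj, h1, h2⟩ := h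
    simp only [LTree.reduce]
    rcases hv : φ v with _ | b
    · refine ⟨fun hc => hv1 (reduce_vars_subset φ t1 hc),
        fun hc => hv2 (reduce_vars_subset φ t2 hc),
        Finset.disjoint_of_subset_left (reduce_vars_subset φ t1)
          (Finset.disjoint_of_subset_right (reduce_vars_subset φ t2) hdisj),
        reduce_distinct φ t1 h1, reduce_distinct φ t2 h2⟩
    · cases b
      · exact reduce_distinct φ t1 h1
      · exact reduce_distinct φ t2 h2

lemma reduce_hs_le (φ : PAssign) : ∀ t : LTree, (t.reduce φ).hs ≤ t.hs
  | .leaf => le_refl _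
  | .node v t1 t2 => by
    have h1 := reduce_hs_le φ t1
    have h2 := reduce_hs_le φ t2
    simp only [LTree.reduce]
    rcases hv : φ v with _ | b
    · simp only [LTree.hs]
      calc (if (t1.reduce φ).hs = (t2.reduce φ).hs then (t1.reduce φ).hs + 1
              else max (t1.reduce φ).hs (t2.reduce φ).hs)
          ≤ (if t1.hs = (t2.reduce φ).hs then t1.hs + 1 else max t1.hs (t2.reduce φ).hs) :=
            hsIf_mono h1
        _ ≤ _ := hsIf_mono' h2
    · cases b
      · exact le_trans (reduce_hs_le φ t1) (by simp only [LTree.hs]; exact le_hsIf_left)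
      · exact le_trans (reduce_hs_le φ t2) (by simp only [LTree.hs]; exact le_hsIf_right)

end Reduce

section ClausesAux

lemma clausesAux_superset : ∀ (t : LTree) (C0 D : Clause), D ∈ t.clausesAux C0 → C0 ⊆ D
  | .leaf, C0, D, h => by
    simp only [LTree.clausesAux, Finset.mem_singleton] at h
    exact h ▸ le_refl _
  | .node v t1 t2, C0, D, h => by
    simp only [LTree.clausesAux, Finset.mem_union] at h
    rcases h with h | h
    · exact (Finset.subset_insert _ _).trans (clausesAux_superset t1 _ D h)
    · exact (Finset.subset_insert _ _).trans (clausesAux_superset t2 _ D h)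

lemma clausesAux_vars : ∀ (t : LTree) (C0 D : Clause), D ∈ t.clausesAux C0 →
    ∀ x ∈ D, x ∈ C0 ∨ x.1 ∈ t.vars
  | .leaf, C0, D, h => by
    simp only [LTree.clausesAux, Finset.mem_singleton] at h
    subst h; exact fun x hx => Or.inl hx
  | .node v t1 t2, C0, D, h => by
    simp only [LTree.clausesAux, Finset.mem_union] at h
    intro x hx
    rcases h with h | h
    · rcases clausesAux_vars t1 _ D h x hx with h' | h'
      · rcases Finset.mem_insert.1 h' with rfl | h''
        · exact Or.inr (by simp [LTree.vars])
        · exact Or.inl h''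
      · exact Or.inr (by simp [LTree.vars, h'])
    · rcases clausesAux_vars t2 _ D h x hx with h' | h'
      · rcases Finset.mem_insert.1 h' with rfl | h''
        · exact Or.inr (by simp [LTree.vars])
        · exact Or.inl h''
      · exact Or.inr (by simp [LTree.vars, h'])

/-- Clauses of a distinct tree are taut-free (relative to a compatible base clause). -/
lemma clausesAux_tautFree : ∀ (t : LTree), t.distinct → ∀ (C0 : Clause), tautFree C0 →
    (∀ x ∈ C0, x.1 ∉ t.vars) → ∀ D ∈ t.clausesAux C0, tautFree D
  | .leaf, _, C0, hC0, _, D, hD => by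
    simp only [LTree.clausesAux, Finset.mem_singleton] at hD
    exact hD ▸ hC0
  | .node v t1 t2, hd, C0, hC0, hcompat, D, hD => by
    obtain ⟨hv1, hv2, hdisj, h1, h2⟩ := hd
    simp only [LTree.clausesAux, Finset.mem_union] at hD
    have hvC0 : ∀ b : Bool, ((v, b) : Lit) ∉ C0 := by
      intro b hb
      exact hcompat _ hb (by simp [LTree.vars])
    rcases hD with hD | hD
    · refine clausesAux_tautFree t1 h1 _ ?_ ?_ D hD
      · intro x hx
        rcases Finset.mem_insert.1 hx with rfl | hx'
        · simp only [Lit.comp, Finset.mem_insert]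
          push_neg
          exact ⟨by simp, hvC0 _⟩
        · intro hc
          rcases Finset.mem_insert.1 hc with hc' | hc'
          · have : x = (v, false) := by
              have := congrArg Lit.comp hc'
              rwa [Lit.comp_comp] at this
            subst this
            exact hvC0 false hx'
          · exact hC0 x hx' hc'
      · intro x hx
        rcases Finset.mem_insert.1 hx with rfl | hx'
        · exact hv1
        · intro hc
          exact hcompat x hx' (by simp [LTree.vars, hc])
    · refine clausesAux_tautFree t2 h2 _ ?_ ?_ D hD
      · intro x hx
        rcases Finset.mem_insert.1 hx with rfl | hx'
        · simp only [Lit.comp, Finset.mem_insert]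
          push_neg
          exact ⟨by simp, hvC0 _⟩
        · intro hc
          rcases Finset.mem_insert.1 hc with hc' | hc'
          · have : x = (v, true) := by
              have := congrArg Lit.comp hc'
              rwa [Lit.comp_comp] at this
            subst this
            exact hvC0 true hx'
          · exact hC0 x hx' hc'
      · intro x hx
        rcases Finset.mem_insert.1 hx with rfl | hx'
        · exact hv2
        · intro hc
          exact hcompat x hx' (by simp [LTree.vars, hc])

lemma smu1_tautFree {t : LTree} (ht : t.distinct) : ∀ D ∈ smu1 t, tautFree D :=
  clausesAux_tautFree t ht ∅ (by simp [tautFree]) (by simp)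

end ClausesAux

section ResLemmas

lemma valid_tautFree : ∀ R : ResTree, R.valid → (∀ C ∈ R.axioms, tautFree C) →
    tautFree R.concl
  | .ax C, _, hax => hax C (by simp [ResTree.axioms])
  | .res x R1 R2, hval, hax => by
    obtain ⟨h1, h2, hint⟩ := hval
    have t1 : tautFree R1.concl :=
      valid_tautFree R1 h1 (fun C hC => hax C (by simp [ResTree.axioms, hC]))
    have t2 : tautFree R2.concl :=
      valid_tautFree R2 h2 (fun C hC => hax C (by simp [ResTree.axioms, hC]))
    intro y hy hyc
    simp only [ResTree.concl, Finset.mem_sdiff, Finset.mem_union, Finset.mem_insert,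
      Finset.mem_singleton] at hy hyc
    obtain ⟨hy1, hy2⟩ := hy
    obtain ⟨hyc1, hyc2⟩ := hyc
    rcases hy1 with hy1 | hy1 <;> rcases hyc1 with hyc1 | hyc1
    · exact t1 y hy1 hyc1
    · have : y ∈ R1.concl ∩ Clause.compl R2.concl :=
        Finset.mem_inter.2 ⟨hy1, mem_compl_iff.2 hyc1⟩
      rw [hint] at this
      exact hy2 (Or.inl (Finset.mem_singleton.1 this))
    · have : Lit.comp y ∈ R1.concl ∩ Clause.compl R2.concl :=
        Finset.mem_inter.2 ⟨hyc1, mem_compl_iff.2 (by rwa [Lit.comp_comp])⟩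
      rw [hint] at this
      exact hy2 (Or.inr (by
        have := Finset.mem_singleton.1 this
        have := congrArg Lit.comp this
        rwa [Lit.comp_comp] at this))
    · exact t2 y hy1 hyc1

lemma res_parent_subsets {x : Lit} {R1 R2 : ResTree}
    (hint : R1.concl ∩ Clause.compl R2.concl = {x})
    (t1 : tautFree R1.concl) (t2 : tautFree R2.concl) :
    R1.concl ⊆ insert x (ResTree.res x R1 R2).concl ∧
    R2.concl ⊆ insert (Lit.comp x) (ResTree.res x R1 R2).concl := by
  have hx1 : x ∈ R1.concl := by
    have : x ∈ R1.concl ∩ Clause.compl R2.concl := by rw [hint]; simp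
    exact (Finset.mem_inter.1 this).1
  have hx2 : Lit.comp x ∈ R2.concl := by
    have : x ∈ R1.concl ∩ Clause.compl R2.concl := by rw [hint]; simp
    exact mem_compl_iff.1 (Finset.mem_inter.1 this).2
  have hcx1 : Lit.comp x ∉ R1.concl := t1 x hx1
  have hx2' : x ∉ R2.concl := by
    intro hc
    exact t2 x hc hx2
  constructor
  · intro y hy
    by_cases hyx : y = x
    · simp [hyx]
    · refine Finset.mem_insert.2 (Or.inr ?_)
      simp only [ResTree.concl, Finset.mem_sdiff, Finset.mem_union, Finset.mem_insert,
        Finset.mem_singleton]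
      refine ⟨Or.inl hy, ?_⟩
      push_neg
      refine ⟨hyx, ?_⟩
      intro hc
      exact hcx1 (hc ▸ hy)
  · intro y hy
    by_cases hyx : y = Lit.comp x
    · simp [hyx]
    · refine Finset.mem_insert.2 (Or.inr ?_)
      simp only [ResTree.concl, Finset.mem_sdiff, Finset.mem_union, Finset.mem_insert,
        Finset.mem_singleton]
      refine ⟨Or.inr hy, ?_⟩
      push_neg
      refine ⟨?_, hyx⟩
      intro hc
      exact hx2' (hc ▸ hy)

end ResLemmas

section ClaimD

/-- Update a partial assignment at one variable. -/
def PAssign.upd (φ : PAssign) (w : ℕ) (b : Bool) : PAssign :=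
  fun v => if v = w then some b else φ v

lemma upd_self (φ : PAssign) (w : ℕ) (b : Bool) : PAssign.upd φ w b w = some b := by
  simp [PAssign.upd]

lemma upd_other (φ : PAssign) {w v : ℕ} (b : Bool) (h : v ≠ w) :
    PAssign.upd φ w b v = φ v := by
  simp [PAssign.upd, h]

lemma reduce_upd_not_mem {φ : PAssign} {w : ℕ} {b : Bool} {t : LTree} (h : w ∉ t.vars) :
    t.reduce (PAssign.upd φ w b) = t.reduce φ :=
  reduce_ext (fun v hv => upd_other φ b (fun hc => h (hc ▸ hv)))

/-- Key combinatorial fact: setting one variable either leaves the reduced H-S number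
intact (for some value), or decreases it by at most one (for every value). -/
lemma claimD {φ : PAssign} {w : ℕ} (hw : φ w = none) :
    ∀ t : LTree, t.distinct →
    (∀ b : Bool, (t.reduce φ).hs ≤ (t.reduce (PAssign.upd φ w b)).hs + 1) ∨
    (∃ b : Bool, (t.reduce φ).hs ≤ (t.reduce (PAssign.upd φ w b)).hs)
  | .leaf, _ => Or.inl (fun _ => by simp [LTree.reduce])
  | .node v t1 t2, hd => by
    obtain ⟨hv1, hv2, hdisj, h1, h2⟩ := hd
    rcases hv : φ v with _ | c
    · -- v unassigned
      by_cases hvw : v = w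
      · -- the queried variable is this node
        subst hvw
        have e1 : ∀ b, t1.reduce (PAssign.upd φ v b) = t1.reduce φ :=
          fun b => reduce_upd_not_mem hv1
        have e2 : ∀ b, t2.reduce (PAssign.upd φ v b) = t2.reduce φ :=
          fun b => reduce_upd_not_mem hv2
        by_cases heq : (t1.reduce φ).hs = (t2.reduce φ).hs
        · left
          intro b
          cases b
          · simp only [LTree.reduce, upd_self, LTree.hs, hv, e1, heq]
            split_ifs <;> omega
          · simp only [LTree.reduce, upd_self, LTree.hs, hv, e2, heq]
            split_ifs <;> omega
        · right
          rcases le_or_gt (t1.reduce φ).hs (t2.reduce φ).hs with hle | hlt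
          · exact ⟨true, by simp only [LTree.reduce, upd_self, LTree.hs, hv, e2, if_neg heq]; omega⟩
          · exact ⟨false, by simp only [LTree.reduce, upd_self, LTree.hs, hv, e1, if_neg heq]; omega⟩
      · -- v ≠ w : recurse
        have hred : ∀ ψ : PAssign, ψ v = none →
            (LTree.node v t1 t2).reduce ψ = .node v (t1.reduce ψ) (t2.reduce ψ) := by
          intro ψ hψ; simp [LTree.reduce, hψ]
        have hupdv : ∀ b, PAssign.upd φ w b v = none := by
          intro b; rw [upd_other φ b hvw]; exact hv
        by_cases hmem : w ∈ t1.vars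
        · have hw2 : w ∉ t2.vars := fun hc => (Finset.disjoint_left.1 hdisj hmem) hc
          have e2 : ∀ b, t2.reduce (PAssign.upd φ w b) = t2.reduce φ :=
            fun b => reduce_upd_not_mem hw2
          rcases claimD hw t1 h1 with hA | ⟨b, hB⟩
          · left
            intro b
            rw [hred φ hv, hred _ (hupdv b)]
            simp only [LTree.hs, e2]
            exact hsIf_le_succ (hA b)
          · right
            refine ⟨b, ?_⟩
            rw [hred φ hv, hred _ (hupdv b)]
            simp only [LTree.hs, e2]
            exact hsIf_mono hB
        · have e1 : ∀ b, t1.reduce (PAssign.upd φ w b) = t1.reduce φ :=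
            fun b => reduce_upd_not_mem hmem
          rcases claimD hw t2 h2 with hA | ⟨b, hB⟩
          · left
            intro b
            rw [hred φ hv, hred _ (hupdv b)]
            simp only [LTree.hs, e1]
            exact hsIf_le_succ' (hA b)
          · right
            refine ⟨b, ?_⟩
            rw [hred φ hv, hred _ (hupdv b)]
            simp only [LTree.hs, e1]
            exact hsIf_mono' hB
    · -- v assigned: reduce descends into one child
      have hvw : v ≠ w := fun hc => by rw [hc, hw] at hv; exact nomatch hv
      have hv' : ∀ b, PAssign.upd φ w b v = some c := fun b => by
        rw [upd_other φ b hvw]; exact hv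
      cases c
      · have e : ∀ ψ : PAssign, ψ v = some false →
            (LTree.node v t1 t2).reduce ψ = t1.reduce ψ := by
          intro ψ hψ; simp [LTree.reduce, hψ]
        rw [e φ hv]
        rcases claimD hw t1 h1 with hA | ⟨b, hB⟩
        · exact Or.inl (fun b => by rw [e _ (hv' b)]; exact hA b)
        · exact Or.inr ⟨b, by rw [e _ (hv' b)]; exact hB⟩
      · have e : ∀ ψ : PAssign, ψ v = some true →
            (LTree.node v t1 t2).reduce ψ = t2.reduce ψ := by
          intro ψ hψ; simp [LTree.reduce, hψ]
        rw [e φ hv]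
        rcases claimD hw t2 h2 with hA | ⟨b, hB⟩
        · exact Or.inl (fun b => by rw [e _ (hv' b)]; exact hA b)
        · exact Or.inr ⟨b, by rw [e _ (hv' b)]; exact hB⟩

end ClaimD

section LowerBound

lemma pval_false_iff {φ : PAssign} {x : Lit} :
    Lit.pval φ x = some false ↔ φ x.1 = some (!x.2) := by
  unfold Lit.pval
  rcases h : φ x.1 with _ | b
  · simp
  · cases b <;> cases hx : x.2 <;> simp [hx]

lemma pval_upd_preserve {φ : PAssign} {w : ℕ} {b : Bool} (hw : φ w = none) {y : Lit}
    (h : Lit.pval φ y = some false) : Lit.pval (PAssign.upd φ w b) y = some false := by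
  rw [pval_false_iff] at h ⊢
  have : y.1 ≠ w := fun hc => by rw [hc, hw] at h; exact nomatch h
  rwa [upd_other φ b this]

lemma falsified_reduce_leaf {φ : PAssign} :
    ∀ (t : LTree) (C0 D : Clause), D ∈ t.clausesAux C0 →
    (∀ x ∈ D, Lit.pval φ x = some false) → t.reduce φ = .leaf
  | .leaf, _, _, _, _ => rfl
  | .node v t1 t2, C0, D, hD, hfal => by
    simp only [LTree.clausesAux, Finset.mem_union] at hD
    rcases hD with hD | hD
    · have hmem : ((v, true) : Lit) ∈ D :=
        clausesAux_superset t1 _ D hD (Finset.mem_insert_self _ _)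
      have := pval_false_iff.1 (hfal _ hmem)
      simp only at this
      simp only [LTree.reduce, this]
      exact falsified_reduce_leaf t1 _ D hD hfal
    · have hmem : ((v, false) : Lit) ∈ D :=
        clausesAux_superset t2 _ D hD (Finset.mem_insert_self _ _)
      have := pval_false_iff.1 (hfal _ hmem)
      simp only at this
      simp only [LTree.reduce, this]
      exact falsified_reduce_leaf t2 _ D hD hfal

/-- Lower bound: any refutation-like derivation from smu1 t, whose conclusion is
falsified by α, has Horton-Strahler number at least that of the reduced tree. -/
lemma LB {t : LTree} (ht : t.distinct) :
    ∀ R : ResTree, R.valid → (∀ C ∈ R.axioms, C ∈ smu1 t) →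
    ∀ α : PAssign, (∀ x ∈ R.concl, Lit.pval α x = some false) →
    (t.reduce α).hs ≤ R.hts
  | .ax C, _, hax, α, hfal => by
    have hC : C ∈ smu1 t := hax C (by simp [ResTree.axioms])
    have := falsified_reduce_leaf t ∅ C hC (by
      intro x hx
      exact hfal x (by simpa [ResTree.concl] using hx))
    simp [this, LTree.hs, ResTree.hts]
  | .res x R1 R2, hval, hax, α, hfal => by
    obtain ⟨h1, h2, hint⟩ := hval
    have hax1 : ∀ C ∈ R1.axioms, C ∈ smu1 t :=
      fun C hC => hax C (by simp [ResTree.axioms, hC])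
    have hax2 : ∀ C ∈ R2.axioms, C ∈ smu1 t :=
      fun C hC => hax C (by simp [ResTree.axioms, hC])
    have t1c : tautFree R1.concl :=
      valid_tautFree R1 h1 (fun C hC => smu1_tautFree ht C (hax1 C hC))
    have t2c : tautFree R2.concl :=
      valid_tautFree R2 h2 (fun C hC => smu1_tautFree ht C (hax2 C hC))
    obtain ⟨sub1, sub2⟩ := res_parent_subsets hint t1c t2c
    obtain ⟨w, p⟩ := x
    -- falsifying R1's conclusion reduces to falsifying x plus the conclusion
    have fal1 : ∀ α' : PAssign, (∀ y ∈ (ResTree.res (w,p) R1 R2).concl,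
        Lit.pval α' y = some false) → Lit.pval α' ((w,p) : Lit) = some false →
        ∀ y ∈ R1.concl, Lit.pval α' y = some false := by
      intro α' hf hx y hy
      rcases Finset.mem_insert.1 (sub1 hy) with rfl | hy'
      · exact hx
      · exact hf y hy'
    have fal2 : ∀ α' : PAssign, (∀ y ∈ (ResTree.res (w,p) R1 R2).concl,
        Lit.pval α' y = some false) → Lit.pval α' (Lit.comp ((w,p) : Lit)) = some false →
        ∀ y ∈ R2.concl, Lit.pval α' y = some false := by
      intro α' hf hx y hy
      rcases Finset.mem_insert.1 (sub2 hy) with rfl | hy'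
      · exact hx
      · exact hf y hy'
    rcases hw : α w with _ | c
    · -- w unassigned: use claimD
      have hfal' : ∀ b : Bool, ∀ y ∈ (ResTree.res (w,p) R1 R2).concl,
          Lit.pval (PAssign.upd α w b) y = some false :=
        fun b y hy => pval_upd_preserve hw (hfal y hy)
      have hxf : Lit.pval (PAssign.upd α w (!p)) ((w,p) : Lit) = some false := by
        rw [pval_false_iff]
        simp [upd_self]
      have hcxf : Lit.pval (PAssign.upd α w p) (Lit.comp ((w,p) : Lit)) = some false := by
        rw [pval_false_iff]
        simp [Lit.comp, upd_self]
      rcases claimD hw t ht with hA | ⟨b, hB⟩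
      · have hR1 : (t.reduce (PAssign.upd α w (!p))).hs ≤ R1.hts :=
          LB ht R1 h1 hax1 _ (fal1 _ (hfal' _) hxf)
        have hR2 : (t.reduce (PAssign.upd α w p)).hs ≤ R2.hts :=
          LB ht R2 h2 hax2 _ (fal2 _ (hfal' _) hcxf)
        have hm := min_succ_le_hts ((w,p) : Lit) R1 R2
        have := hA (!p)
        have := hA p
        omega
      · have hbx : Lit.pval (PAssign.upd α w b) ((w,p) : Lit) =
            some (if p then b else !b) := by
          unfold Lit.pval
          simp [upd_self]
        rcases hd : (if p then b else !b) with _ | _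
        · -- x falsified by the update
          have hR1 : (t.reduce (PAssign.upd α w b)).hs ≤ R1.hts :=
            LB ht R1 h1 hax1 _ (fal1 _ (hfal' _) (by rw [hbx, hd]))
          exact le_trans hB (le_trans hR1 (hts_left_le _ R1 R2))
        · -- comp x falsified by the update
          have hcx : Lit.pval (PAssign.upd α w b) (Lit.comp ((w,p) : Lit)) = some false := by
            rw [pval_false_iff]
            revert hd
            cases p <;> cases b <;> simp [Lit.comp, upd_self]
          have hR2 : (t.reduce (PAssign.upd α w b)).hs ≤ R2.hts :=
            LB ht R2 h2 hax2 _ (fal2 _ (hfal' _) hcx)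
          exact le_trans hB (le_trans hR2 (hts_right_le _ R1 R2))
    · -- w assigned by α
      have hpv : Lit.pval α ((w,p) : Lit) = some (if p then c else !c) := by
        unfold Lit.pval
        simp [hw]
      rcases hd : (if p then c else !c) with _ | _
      · have hR1 : (t.reduce α).hs ≤ R1.hts :=
          LB ht R1 h1 hax1 α (fal1 α hfal (by rw [hpv, hd]))
        exact le_trans hR1 (hts_left_le _ R1 R2)
      · have hcx : Lit.pval α (Lit.comp ((w,p) : Lit)) = some false := by
          rw [pval_false_iff]
          revert hd
          cases p <;> cases c <;> simp [Lit.comp, hw]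
        have hR2 : (t.reduce α).hs ≤ R2.hts :=
          LB ht R2 h2 hax2 α (fal2 α hfal hcx)
        exact le_trans hR2 (hts_right_le _ R1 R2)

end LowerBound

section RefTree

/-- The canonical refutation of smu1 t, deriving the accumulated clause C. -/
def refTree : LTree → Clause → ResTree
  | .leaf, C => .ax C
  | .node v t1 t2, C =>
      .res ((v, true) : Lit) (refTree t1 (insert ((v, true) : Lit) C))
        (refTree t2 (insert ((v, false) : Lit) C))

lemma refTree_axioms : ∀ (t : LTree) (C : Clause), (refTree t C).axioms = t.clausesAux C
  | .leaf, _ => rfl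
  | .node v t1 t2, C => by
    simp only [refTree, ResTree.axioms, LTree.clausesAux, refTree_axioms]

lemma refTree_hts : ∀ (t : LTree) (C : Clause), (refTree t C).hts = t.hs
  | .leaf, _ => rfl
  | .node v t1 t2, C => by
    simp only [refTree, ResTree.hts, LTree.hs, refTree_hts]

lemma child_compat {v : ℕ} {t1 t2 : LTree} {C : Clause} (hd : (LTree.node v t1 t2).distinct)
    (hC : ∀ x ∈ C, x.1 ∉ (LTree.node v t1 t2).vars) (b : Bool) :
    (∀ x ∈ insert ((v, b) : Lit) C, x.1 ∉ t1.vars) ∧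
    (∀ x ∈ insert ((v, b) : Lit) C, x.1 ∉ t2.vars) := by
  obtain ⟨hv1, hv2, _, _, _⟩ := hd
  constructor <;>
  · intro x hx
    rcases Finset.mem_insert.1 hx with rfl | hx'
    · simpa using (by assumption : v ∉ _)
    · intro hc
      exact hC x hx' (by simp [LTree.vars, hc])

lemma refTree_concl : ∀ (t : LTree) (C : Clause), t.distinct → (∀ x ∈ C, x.1 ∉ t.vars) →
    (refTree t C).concl = C
  | .leaf, _, _, _ => rfl
  | .node v t1 t2, C, hd, hC => by
    have hv : ∀ b : Bool, ((v, b) : Lit) ∉ C := by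
      intro b hb
      exact hC _ hb (by simp [LTree.vars])
    obtain ⟨hv1, hv2, hdisj, h1, h2⟩ := hd
    have e1 : (refTree t1 (insert ((v, true) : Lit) C)).concl = insert ((v, true) : Lit) C :=
      refTree_concl t1 _ h1 (child_compat ⟨hv1, hv2, hdisj, h1, h2⟩ hC true).1
    have e2 : (refTree t2 (insert ((v, false) : Lit) C)).concl = insert ((v, false) : Lit) C :=
      refTree_concl t2 _ h2 (child_compat ⟨hv1, hv2, hdisj, h1, h2⟩ hC false).2
    simp only [refTree, ResTree.concl, e1, e2]
    ext y
    simp only [Finset.mem_sdiff, Finset.mem_union, Finset.mem_insert, Finset.mem_singleton,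
      Lit.comp]
    constructor
    · rintro ⟨h, hne⟩
      push_neg at hne
      rcases h with (rfl | h) | (rfl | h)
      · exact absurd rfl hne.1
      · exact h
      · exact absurd rfl hne.2
      · exact h
    · intro hy
      refine ⟨Or.inl (Or.inr hy), ?_⟩
      push_neg
      constructor
      · rintro rfl
        exact hv true hy
      · rintro rfl
        exact hv false hy

lemma refTree_valid : ∀ (t : LTree) (C : Clause), t.distinct → tautFree C →
    (∀ x ∈ C, x.1 ∉ t.vars) → (refTree t C).valid
  | .leaf, _, _, _, _ => trivial
  | .node v t1 t2, C, hd, htf, hC => by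
    have hv : ∀ b : Bool, ((v, b) : Lit) ∉ C := by
      intro b hb
      exact hC _ hb (by simp [LTree.vars])
    obtain ⟨hv1, hv2, hdisj, h1, h2⟩ := hd
    have htf' : ∀ b : Bool, tautFree (insert ((v, b) : Lit) C) := by
      intro b x hx hcx
      rcases Finset.mem_insert.1 hx with rfl | hx'
      · rcases Finset.mem_insert.1 hcx with hc | hc
        · simp [Lit.comp] at hc
        · exact hv _ hc
      · rcases Finset.mem_insert.1 hcx with hc | hc
        · have : x = ((v, !b) : Lit) := by
            have := congrArg Lit.comp hc
            rwa [Lit.comp_comp] at this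
          exact hv _ (this ▸ hx')
        · exact htf x hx' hc
    refine ⟨refTree_valid t1 _ h1 (htf' true)
        (child_compat ⟨hv1, hv2, hdisj, h1, h2⟩ hC true).1,
      refTree_valid t2 _ h2 (htf' false)
        (child_compat ⟨hv1, hv2, hdisj, h1, h2⟩ hC false).2, ?_⟩
    rw [refTree_concl t1 _ h1 (child_compat ⟨hv1, hv2, hdisj, h1, h2⟩ hC true).1,
      refTree_concl t2 _ h2 (child_compat ⟨hv1, hv2, hdisj, h1, h2⟩ hC false).2]
    ext y
    simp only [Finset.mem_inter, Finset.mem_singleton]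
    constructor
    · rintro ⟨hy1, hy2⟩
      rcases Finset.mem_insert.1 hy1 with rfl | hy1'
      · rfl
      · exfalso
        rcases mem_compl_iff.1 hy2 with h
        rcases Finset.mem_insert.1 h with hc | hc
        · have : y = ((v, true) : Lit) := by
            have := congrArg Lit.comp hc
            rwa [Lit.comp_comp] at this
          exact hv true (this ▸ hy1')
        · exact htf y hy1' hc
    · rintro rfl
      refine ⟨Finset.mem_insert_self _ _, mem_compl_iff.2 ?_⟩
      simp [Lit.comp]

end RefTree

section Papply

lemma mem_papply {φ : PAssign} {F : ClauseSet} {E : Clause} :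
    E ∈ papply φ F ↔ ∃ C ∈ F, ¬ csat φ C ∧ papplyC φ C = E := by
  simp only [papply, Finset.mem_image, Finset.mem_filter]
  constructor
  · rintro ⟨C, ⟨hC, hcs⟩, rfl⟩
    exact ⟨C, hC, hcs, rfl⟩
  · rintro ⟨C, hC, hcs, rfl⟩
    exact ⟨C, ⟨hC, hcs⟩, rfl⟩

lemma papply_union {φ : PAssign} {A B : ClauseSet} :
    papply φ (A ∪ B) = papply φ A ∪ papply φ B := by
  simp [papply, Finset.filter_union, Finset.image_union]

lemma pval_none {φ : PAssign} {x : Lit} (h : φ x.1 = none) : Lit.pval φ x = none := by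
  simp [Lit.pval, h]

lemma pval_self_some {φ : PAssign} {v : ℕ} {b c : Bool} (h : φ v = some c) :
    Lit.pval φ ((v, b) : Lit) = some (if b then c else !c) := by
  simp [Lit.pval, h]

lemma papplyC_insert_false {φ : PAssign} {x : Lit} {C : Clause}
    (h : Lit.pval φ x = some false) : papplyC φ (insert x C) = papplyC φ C := by
  unfold papplyC
  rw [Finset.filter_insert, if_neg (by simp [h])]

lemma papplyC_insert_keep {φ : PAssign} {x : Lit} {C : Clause}
    (h : Lit.pval φ x ≠ some false) : papplyC φ (insert x C) = insert x (papplyC φ C) := by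
  unfold papplyC
  rw [Finset.filter_insert, if_pos (by simp [h])]

lemma papply_clausesAux {φ : PAssign} : ∀ (t : LTree) (C : Clause),
    (∀ x ∈ C, Lit.pval φ x ≠ some true) →
    papply φ (t.clausesAux C) = (t.reduce φ).clausesAux (papplyC φ C)
  | .leaf, C, hC => by
    have hns : ¬ csat φ C := by
      rintro ⟨x, hx, hsat⟩
      exact hC x hx hsat
    simp [LTree.clausesAux, LTree.reduce, papply, Finset.filter_singleton, hns]
  | .node v t1 t2, C, hC => by
    simp only [LTree.clausesAux, papply_union]
    rcases hv : φ v with _ | c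
    · have hkeep : ∀ b : Bool, Lit.pval φ ((v, b) : Lit) = none := fun b => pval_none hv
      have hext : ∀ b : Bool, ∀ x ∈ insert ((v, b) : Lit) C, Lit.pval φ x ≠ some true := by
        intro b x hx
        rcases Finset.mem_insert.1 hx with rfl | hx'
        · simp [hkeep]
        · exact hC x hx'
      rw [papply_clausesAux t1 _ (hext true), papply_clausesAux t2 _ (hext false),
        papplyC_insert_keep (by simp [hkeep]), papplyC_insert_keep (by simp [hkeep])]
      simp [LTree.reduce, hv, LTree.clausesAux]
    · cases c
      · -- φ v = some false : t2-branch is satisfied, t1-branch survives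
        have hsat : papply φ (t2.clausesAux (insert ((v, false) : Lit) C)) = ∅ := by
          rw [Finset.eq_empty_iff_forall_notMem]
          intro E hE
          rcases mem_papply.1 hE with ⟨D, hD, hns, _⟩
          exact hns ⟨(v, false), clausesAux_superset t2 _ D hD (Finset.mem_insert_self _ _),
            by rw [pval_self_some hv]; simp⟩
        have hext : ∀ x ∈ insert ((v, true) : Lit) C, Lit.pval φ x ≠ some true := by
          intro x hx
          rcases Finset.mem_insert.1 hx with rfl | hx'
          · rw [pval_self_some hv]; simp
          · exact hC x hx'
        rw [hsat, papply_clausesAux t1 _ hext,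
          papplyC_insert_false (by rw [pval_self_some hv]; simp)]
        simp [LTree.reduce, hv]
      · -- φ v = some true : t1-branch is satisfied, t2-branch survives
        have hsat : papply φ (t1.clausesAux (insert ((v, true) : Lit) C)) = ∅ := by
          rw [Finset.eq_empty_iff_forall_notMem]
          intro E hE
          rcases mem_papply.1 hE with ⟨D, hD, hns, _⟩
          exact hns ⟨(v, true), clausesAux_superset t1 _ D hD (Finset.mem_insert_self _ _),
            by rw [pval_self_some hv]; simp⟩
        have hext : ∀ x ∈ insert ((v, false) : Lit) C, Lit.pval φ x ≠ some true := by
          intro x hx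
          rcases Finset.mem_insert.1 hx with rfl | hx'
          · rw [pval_self_some hv]; simp
          · exact hC x hx'
        rw [hsat, papply_clausesAux t2 _ hext,
          papplyC_insert_false (by rw [pval_self_some hv]; simp)]
        simp [LTree.reduce, hv]

end Papply

section MoreLemmas

lemma papply_none_eq (F : ClauseSet) : papply (fun _ => none) F = F := by
  have h1 : ∀ C : Clause, papplyC (fun _ => none) C = C := by
    intro C
    unfold papplyC
    apply Finset.filter_true_of_mem
    intro x _
    simp [Lit.pval]
  have h2 : ∀ C : Clause, ¬ csat (fun _ => none) C := by
    rintro C ⟨x, _, hx⟩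
    simp [Lit.pval] at hx
  ext E
  rw [mem_papply]
  constructor
  · rintro ⟨C, hC, _, rfl⟩
    rwa [h1]
  · intro hE
    exact ⟨E, hE, h2 E, h1 E⟩

lemma exists_falsified (a : ℕ → Bool) : ∀ (t : LTree) (C0 : Clause),
    (∀ x ∈ C0, Lit.eval a x = false) →
    ∃ D ∈ t.clausesAux C0, ∀ x ∈ D, Lit.eval a x = false
  | .leaf, C0, h => ⟨C0, by simp [LTree.clausesAux], h⟩
  | .node v t1 t2, C0, h => by
    rcases hav : a v with _ | _
    · -- a v = false : literal (v,true) is false, go into t1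
      have hins : ∀ x ∈ insert ((v, true) : Lit) C0, Lit.eval a x = false := by
        intro x hx
        rcases Finset.mem_insert.1 hx with rfl | hx'
        · simp [Lit.eval, hav]
        · exact h x hx'
      obtain ⟨D, hD, hfD⟩ := exists_falsified a t1 _ hins
      exact ⟨D, by simp [LTree.clausesAux, Finset.mem_union, hD], hfD⟩
    · have hins : ∀ x ∈ insert ((v, false) : Lit) C0, Lit.eval a x = false := by
        intro x hx
        rcases Finset.mem_insert.1 hx with rfl | hx'
        · simp [Lit.eval, hav]
        · exact h x hx'
      obtain ⟨D, hD, hfD⟩ := exists_falsified a t2 _ hins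
      exact ⟨D, by simp [LTree.clausesAux, Finset.mem_union, hD], hfD⟩

lemma unsat_smu1 (t : LTree) : unsat (smu1 t) := by
  rintro ⟨a, ha⟩
  obtain ⟨D, hD, hfD⟩ := exists_falsified a t ∅ (by simp)
  obtain ⟨x, hx, hex⟩ := ha D hD
  rw [hfD x hx] at hex
  exact Bool.noConfusion hex

lemma clausesAux_separate : ∀ (t : LTree) (C0 D C' : Clause), D ∈ t.clausesAux C0 →
    C' ∈ t.clausesAux C0 → C' ≠ D →
    ∃ (v : ℕ) (b : Bool), ((v, b) : Lit) ∈ C' ∧ ((v, !b) : Lit) ∈ D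
  | .leaf, C0, D, C', hD, hC', hne => by
    simp only [LTree.clausesAux, Finset.mem_singleton] at hD hC'
    exact absurd (hC'.trans hD.symm) hne
  | .node v t1 t2, C0, D, C', hD, hC', hne => by
    simp only [LTree.clausesAux, Finset.mem_union] at hD hC'
    rcases hD with hD | hD <;> rcases hC' with hC' | hC'
    · exact clausesAux_separate t1 _ D C' hD hC' hne
    · exact ⟨v, false, clausesAux_superset t2 _ C' hC' (Finset.mem_insert_self _ _),
        by simpa using clausesAux_superset t1 _ D hD (Finset.mem_insert_self _ _)⟩
    · exact ⟨v, true, clausesAux_superset t1 _ C' hC' (Finset.mem_insert_self _ _),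
        by simpa using clausesAux_superset t2 _ D hD (Finset.mem_insert_self _ _)⟩
    · exact clausesAux_separate t2 _ D C' hD hC' hne

/-- Every proper "sub-clause-set" of smu1 t missing D is satisfiable. -/
lemma sat_omit {t : LTree} (ht : t.distinct) {D : Clause} (hD : D ∈ smu1 t) :
    ∃ a : ℕ → Bool, ∀ C' ∈ smu1 t, C' ≠ D → Clause.sat a C' := by
  refine ⟨fun v => if ((v, true) : Lit) ∈ D then false else true, ?_⟩
  intro C' hC' hne
  obtain ⟨v, b, hbC', hbD⟩ := clausesAux_separate t ∅ D C' hD hC' hne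
  have htf := smu1_tautFree ht D hD
  cases b
  · -- (v,false) ∈ C', (v,true) ∈ D
    simp only [Bool.not_false] at hbD
    exact ⟨(v, false), hbC', by simp [Lit.eval, hbD]⟩
  · -- (v,true) ∈ C', (v,false) ∈ D hence (v,true) ∉ D
    simp only [Bool.not_true] at hbD
    have hvt : ((v, true) : Lit) ∉ D := by
      intro hc
      exact htf _ hbD (by simpa [Lit.comp] using hc)
    exact ⟨(v, true), hbC', by simp [Lit.eval, hvt]⟩

lemma mem_vars_of_mem {F : ClauseSet} {C : Clause} {x : Lit} (hC : C ∈ F) (hx : x ∈ C) :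
    x.1 ∈ vars F := by
  have h1 : x.1 ∈ varsC C := Finset.mem_image.2 ⟨x, hx, rfl⟩
  exact (Finset.le_sup (f := varsC) hC) h1

end MoreLemmas

section Dope

lemma mem_dope {u : Clause → ℕ} {F : ClauseSet} {E : Clause} :
    E ∈ dope u F ↔ ∃ C ∈ F, insert ((u C, true) : Lit) C = E := by
  simp [dope]

/-- If the doped clause-set restricted by φ is unsatisfiable, then all of
smu1 (T.reduce φ) occurs among its clauses. -/
lemma doped_unsat_subset {T : LTree} (hT : T.distinct) {u : Clause → ℕ}
    (hfresh : ∀ C ∈ smu1 T, u C ∉ vars (smu1 T)) {φ : PAssign}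
    (hunsat : unsat (papply φ (dope u (smu1 T)))) :
    smu1 (T.reduce φ) ⊆ papply φ (dope u (smu1 T)) := by
  have hDF : papply φ (smu1 T) = smu1 (T.reduce φ) := by
    rw [show (smu1 T) = T.clausesAux ∅ from rfl, papply_clausesAux T ∅ (by simp),
      show papplyC φ ∅ = ∅ from Finset.filter_empty _]
    rfl
  intro D0 hD0
  by_contra hD0n
  apply hunsat
  obtain ⟨a, ha⟩ := sat_omit (reduce_distinct φ T hT) hD0
  refine ⟨fun v => if v ∈ vars (smu1 T) then a v else true, ?_⟩
  intro E hE
  rcases mem_papply.1 hE with ⟨Cp, hCp, hns, hEeq⟩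
  rcases mem_dope.1 hCp with ⟨C, hCF, rfl⟩
  rcases hφu : φ (u C) with _ | c
  · -- doping literal survives and is set to true
    have hmem : ((u C, true) : Lit) ∈ E := by
      rw [← hEeq]
      refine Finset.mem_filter.2 ⟨Finset.mem_insert_self _ _, ?_⟩
      rw [pval_none (x := ((u C, true) : Lit)) hφu]
      simp
    refine ⟨(u C, true), hmem, ?_⟩
    simp [Lit.eval, hfresh C hCF]
  · cases c
    · -- φ (u C) = some false
      have hEC : E = papplyC φ C := by
        rw [← hEeq, papplyC_insert_false (by rw [pval_self_some hφu]; simp)]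
      have hnsC : ¬ csat φ C := fun ⟨x, hx, hxs⟩ => hns ⟨x, Finset.mem_insert_of_mem hx, hxs⟩
      have hES : E ∈ smu1 (T.reduce φ) := by
        rw [← hDF]
        exact mem_papply.2 ⟨C, hCF, hnsC, hEC.symm⟩
      have hne : E ≠ D0 := fun hc => hD0n (hc ▸ hE)
      obtain ⟨x, hxE, hxev⟩ := ha E hES hne
      have hxC : x ∈ C := by
        rw [hEC] at hxE
        exact Finset.filter_subset _ _ hxE
      have hxv : x.1 ∈ vars (smu1 T) := mem_vars_of_mem hCF hxC
      refine ⟨x, hxE, ?_⟩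
      have heq : Lit.eval (fun v => if v ∈ vars (smu1 T) then a v else true) x
          = Lit.eval a x := by
        simp [Lit.eval, hxv]
      rw [heq]
      exact hxev
    · exact absurd ⟨(u C, true), Finset.mem_insert_self _ _,
        by rw [pval_self_some hφu]; simp⟩ hns

/-- The partial assignment killing the doping literals recovers F. -/
lemma papply_dope_eq {T : LTree} {u : Clause → ℕ}
    (hfresh : ∀ C ∈ smu1 T, u C ∉ vars (smu1 T)) :
    papply (fun v => if v ∈ Finset.image u (smu1 T) then (some false : Option Bool)
      else none) (dope u (smu1 T)) = smu1 T := by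
  set φ0 : PAssign := fun v => if v ∈ Finset.image u (smu1 T) then (some false : Option Bool)
    else none with hφ0
  have hvars_none : ∀ C ∈ smu1 T, ∀ x ∈ C, φ0 x.1 = none := by
    intro C hC x hx
    rw [hφ0]
    simp only
    rw [if_neg]
    intro hmem
    rcases Finset.mem_image.1 hmem with ⟨C', hC', hu'⟩
    exact hfresh C' hC' (hu' ▸ mem_vars_of_mem hC hx)
  have hφ0u : ∀ C ∈ smu1 T, φ0 (u C) = some false := by
    intro C hC
    rw [hφ0]
    simp only
    rw [if_pos (Finset.mem_image.2 ⟨C, hC, rfl⟩)]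
  ext E
  rw [mem_papply]
  constructor
  · rintro ⟨Cp, hCp, _, rfl⟩
    rcases mem_dope.1 hCp with ⟨C, hCF, rfl⟩
    rw [papplyC_insert_false (by rw [pval_self_some (hφ0u C hCF)]; simp)]
    rw [show papplyC φ0 C = C from Finset.filter_true_of_mem
      (fun x hx => by simp [pval_none (hvars_none C hCF x hx)])]
    exact hCF
  · intro hEF
    refine ⟨insert ((u E, true) : Lit) E, mem_dope.2 ⟨E, hEF, rfl⟩, ?_, ?_⟩
    · rintro ⟨x, hx, hxs⟩
      rcases Finset.mem_insert.1 hx with rfl | hx'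
      · rw [pval_self_some (hφ0u E hEF)] at hxs
        simp at hxs
      · rw [pval_none (hvars_none E hEF x hx')] at hxs
        exact nomatch hxs
    · rw [papplyC_insert_false (by rw [pval_self_some (hφ0u E hEF)]; simp)]
      exact Finset.filter_true_of_mem
        (fun x hx => by simp [pval_none (hvars_none E hEF x hx)])

end Dope

/-- For F ∈ SMU(δ=1) with associated tree T, the hardness of F and of its doped
version both equal the Horton-Strahler number of T. -/
theorem hd_smu1_eq_hortonStrahler (T : LTree) (hT : T.distinct) (F : ClauseSet)
    (hF : F = smu1 T) (u : Clause → ℕ) (hu : freshDoping u F) :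
    hd F = T.hs ∧ hd (dope u F) = T.hs := by
  subst hF
  have hfresh : ∀ C ∈ smu1 T, u C ∉ vars (smu1 T) := hu.1
  -- common upper bound refutation
  have href : ∀ φ : PAssign, ∃ R : ResTree, R.valid ∧ R.axioms = smu1 (T.reduce φ) ∧
      R.concl = ∅ ∧ R.hts ≤ T.hs := by
    intro φ
    refine ⟨refTree (T.reduce φ) ∅,
      refTree_valid _ ∅ (reduce_distinct φ T hT) (by simp [tautFree]) (by simp),
      by rw [refTree_axioms]; rfl,
      refTree_concl _ ∅ (reduce_distinct φ T hT) (by simp),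
      by rw [refTree_hts]; exact reduce_hs_le φ T⟩
  have hDF : ∀ φ : PAssign, papply φ (smu1 T) = smu1 (T.reduce φ) := by
    intro φ
    rw [show (smu1 T) = T.clausesAux ∅ from rfl, papply_clausesAux T ∅ (by simp),
      show papplyC φ ∅ = ∅ from Finset.filter_empty _]
    rfl
  -- undoped: upper bound
  have hupper : hdLe (smu1 T) T.hs := by
    intro φ _
    obtain ⟨R, hval, hax, hconcl, hhts⟩ := href φ
    exact ⟨R, hval, by rw [hax, hDF φ], hconcl, hhts⟩
  -- undoped: lower bound
  have hlower : ∀ k ∈ {k | hdLe (smu1 T) k}, T.hs ≤ k := by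
    intro k hk
    obtain ⟨R, hval, hax, hconcl, hhts⟩ :=
      hk (fun _ => none) (by rw [papply_none_eq]; exact unsat_smu1 T)
    rw [papply_none_eq] at hax
    have hLB := LB hT R hval (fun C hC => hax hC) (fun _ => none)
      (by rw [hconcl]; simp)
    rw [reduce_none] at hLB
    exact le_trans hLB hhts
  -- doped: upper bound
  have hupperD : hdLe (dope u (smu1 T)) T.hs := by
    intro φ hunsat
    obtain ⟨R, hval, hax, hconcl, hhts⟩ := href φ
    exact ⟨R, hval, by rw [hax]; exact doped_unsat_subset hT hfresh hunsat, hconcl, hhts⟩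
  -- doped: lower bound
  have hlowerD : ∀ k ∈ {k | hdLe (dope u (smu1 T)) k}, T.hs ≤ k := by
    intro k hk
    obtain ⟨R, hval, hax, hconcl, hhts⟩ :=
      hk (fun v => if v ∈ Finset.image u (smu1 T) then (some false : Option Bool) else none)
        (by rw [papply_dope_eq hfresh]; exact unsat_smu1 T)
    rw [papply_dope_eq hfresh] at hax
    have hLB := LB hT R hval (fun C hC => hax hC) (fun _ => none)
      (by rw [hconcl]; simp)
    rw [reduce_none] at hLB
    exact le_trans hLB hhts
  constructor
  · exact le_antisymm (Nat.sInf_le hupper) (le_csInf ⟨T.hs, hupper⟩ hlower)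
  · exact le_antisymm (Nat.sInf_le hupperD) (le_csInf ⟨T.hs, hupperD⟩ hlowerD)
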